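/- Under dichotomous valuations, if A is an envy-freeable allocation, B = A_σ for some permutation σ is an allocation with the same social welfare (∑_i v_i(B_i) = ∑_i v_i(A_i)), g is an unallocated good, and agent k satisfies v_k(B_k ∪ {g}) ≥ v_k(B_k) + 1, then B is envy-freeable and the allocation (B_1, ..., B_k ∪ {g}, ..., B_n) achieves the maximum social welfare ∑_i v_i(A_i) + 1 among all allocations obtained by reassigning its bundles. -/
import Mathlib


/-- Under dichotomous valuations, if `A` is envy-freeable (welfare
maximizing over reassignments of its bundles), `B = A_σ` has the same social
welfare as `A`, `g` is an unallocated good, and agent `k` has marginal value at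
least `1` for `g` relative to `B k`, then `B` is envy-freeable and the allocation
obtained from `B` by adding `g` to `B k` has social welfare `∑ i, v i (A i) + 1`,
which is maximal among all reassignments of its bundles. -/
theorem augmented_allocation_welfare_maximal {n m : ℕ}
    (v : Fin n → Finset (Fin m) → ℝ)
    (hempty : ∀ i, v i ∅ = 0)
    (hdich : ∀ i (S : Finset (Fin m)) (g : Fin m),
        v i (insert g S) - v i S = 0 ∨ v i (insert g S) - v i S = 1)
    (A : Fin n → Finset (Fin m))
    (hdisj : ∀ i j, i ≠ j → Disjoint (A i) (A j))
    (hAfreeable : ∀ τ : Equiv.Perm (Fin n),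
        ∑ i, v i (A (τ i)) ≤ ∑ i, v i (A i))
    (σ : Equiv.Perm (Fin n))
    (B : Fin n → Finset (Fin m)) (hB : B = fun i => A (σ i))
    (hsw : ∑ i, v i (B i) = ∑ i, v i (A i))
    (g : Fin m) (hg : ∀ i, g ∉ A i)
    (k : Fin n) (hk : v k (B k) + 1 ≤ v k (insert g (B k))) :
    (∀ τ : Equiv.Perm (Fin n), ∑ i, v i (B (τ i)) ≤ ∑ i, v i (B i)) ∧
    (∑ i, v i (Function.update B k (insert g (B k)) i) = ∑ i, v i (A i) + 1) ∧
    (∀ τ : Equiv.Perm (Fin n),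
        ∑ i, v i (Function.update B k (insert g (B k)) (τ i)) ≤
          ∑ i, v i (Function.update B k (insert g (B k)) i)) := by
  have part1 : ∀ τ : Equiv.Perm (Fin n), ∑ i, v i (B (τ i)) ≤ ∑ i, v i (B i) := by
    intro τ
    have h := hAfreeable (τ.trans σ)
    subst hB
    simpa [hsw, Equiv.trans_apply] using h
  have hmarg : v k (insert g (B k)) = v k (B k) + 1 := by
    rcases hdich k (B k) g with h | h <;> linarith
  set C := Function.update B k (insert g (B k)) with hC
  have part2 : ∑ i, v i (C i) = ∑ i, v i (A i) + 1 := by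
    have hdiff : ∑ i, (v i (C i) - v i (B i)) = 1 := by
      rw [Fintype.sum_eq_single k]
      · simp [hC, Function.update_self, hmarg]
      · intro i hi
        simp [hC, Function.update_of_ne hi]
    have : ∑ i, v i (C i) = ∑ i, v i (B i) + 1 := by
      have := Finset.sum_sub_distrib (s := Finset.univ)
        (f := fun i => v i (C i)) (g := fun i => v i (B i))
      linarith [hdiff, this]
    rw [this, hsw]
  refine ⟨part1, part2, ?_⟩
  intro τ
  have hle : ∀ i, v i (C (τ i)) ≤ v i (B (τ i)) + (if i = τ.symm k then 1 else 0) := by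
    intro i
    by_cases hik : i = τ.symm k
    · subst hik
      have hτ : τ (τ.symm k) = k := τ.apply_symm_apply k
      rw [hτ]
      simp only [hC, Function.update_self, if_pos rfl]
      rw [if_pos trivial]
      rcases hdich (τ.symm k) (B k) g with h | h <;> linarith
    · have hne : τ i ≠ k := fun h => hik (by rw [← h]; simp)
      simp [hC, Function.update_of_ne hne, hik]
  calc ∑ i, v i (C (τ i)) ≤ ∑ i, (v i (B (τ i)) + (if i = τ.symm k then 1 else 0)) :=
        Finset.sum_le_sum fun i _ => hle i
    _ = ∑ i, v i (B (τ i)) + 1 := by rw [Finset.sum_add_distrib]; simp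
    _ ≤ ∑ i, v i (B i) + 1 := by linarith [part1 τ]
    _ = ∑ i, v i (A i) + 1 := by rw [hsw]
    _ = ∑ i, v i (C i) := part2.symm
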